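/- Continuity of the minimum causal effect: let N and N' be quantum channels from a d_A-dimensional system A (with d_A ≥ 2) to a d_B-dimensional system B. If ‖N(ρ) − N'(ρ)‖₁ ≤ ε for every density matrix ρ on A, then |CE_min(N) − CE_min(N')| ≤ ε. -/

import Mathlib

open Matrix ComplexOrder

/-- Trace norm of a square complex matrix. -/
noncomputable def traceNorm {n : Type*} [Fintype n] [DecidableEq n]
    (X : Matrix n n ℂ) : ℝ :=
  (((Matrix.posSemidef_conjTranspose_mul_self X).1.eigenvectorUnitary : Matrix n n ℂ) *
      diagonal (((↑) : ℝ → ℂ) ∘ Real.sqrt ∘ (Matrix.posSemidef_conjTranspose_mul_self X).1.eigenvalues) *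
      (star (Matrix.posSemidef_conjTranspose_mul_self X).1.eigenvectorUnitary : Matrix n n ℂ)).trace.re

/-- A density matrix: positive semidefinite with unit trace. -/
def IsDensityMatrix {n : Type*} [Fintype n] [DecidableEq n] (ρ : Matrix n n ℂ) : Prop :=
  ρ.PosSemidef ∧ ρ.trace = 1

/-- A quantum channel: a linear map admitting a Kraus representation. -/
def IsQuantumChannel {dA dB : ℕ}
    (N : Matrix (Fin dA) (Fin dA) ℂ →ₗ[ℂ] Matrix (Fin dB) (Fin dB) ℂ) : Prop :=
  ∃ (k : ℕ) (K : Fin k → Matrix (Fin dB) (Fin dA) ℂ),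
    (∀ X, N X = ∑ i, K i * X * (K i)ᴴ) ∧ (∑ i, (K i)ᴴ * K i = 1)

/-- Maximum causal effect. -/
noncomputable def CEmax {dA dB : ℕ}
    (N : Matrix (Fin dA) (Fin dA) ℂ →ₗ[ℂ] Matrix (Fin dB) (Fin dB) ℂ) : ℝ :=
  sSup {x : ℝ | ∃ ρ ρ' : Matrix (Fin dA) (Fin dA) ℂ,
    IsDensityMatrix ρ ∧ IsDensityMatrix ρ' ∧ ρ ≠ ρ' ∧
    x = traceNorm (N ρ - N ρ') / traceNorm (ρ - ρ')}

/-- Minimum causal effect. -/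
noncomputable def CEmin {dA dB : ℕ}
    (N : Matrix (Fin dA) (Fin dA) ℂ →ₗ[ℂ] Matrix (Fin dB) (Fin dB) ℂ) : ℝ :=
  sInf {x : ℝ | ∃ ρ ρ' : Matrix (Fin dA) (Fin dA) ℂ,
    IsDensityMatrix ρ ∧ IsDensityMatrix ρ' ∧ ρ ≠ ρ' ∧
    x = traceNorm (N ρ - N ρ') / traceNorm (ρ - ρ')}

/-- Minimum distinguishability preservation. -/
noncomputable def DPmin {dA dB : ℕ}
    (N : Matrix (Fin dA) (Fin dA) ℂ →ₗ[ℂ] Matrix (Fin dB) (Fin dB) ℂ) : ℝ :=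
  sInf {x : ℝ | ∃ p : ℝ, 0 ≤ p ∧ p ≤ 1 ∧
    ∃ ρ ρ' : Matrix (Fin dA) (Fin dA) ℂ,
      IsDensityMatrix ρ ∧ IsDensityMatrix ρ' ∧ ρ ≠ ρ' ∧
      x = traceNorm ((p : ℂ) • N ρ - ((1 - p : ℝ) : ℂ) • N ρ') /
          traceNorm ((p : ℂ) • ρ - ((1 - p : ℝ) : ℂ) • ρ')}

section TraceNormLemmas

variable {n : Type*} [Fintype n] [DecidableEq n]

/-- Square root of a positive semidefinite matrix, as in the definition of `traceNorm`. -/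
noncomputable def Matrix.PosSemidef.sqrt {A : Matrix n n ℂ} (hA : A.PosSemidef) : Matrix n n ℂ :=
  (hA.1.eigenvectorUnitary : Matrix n n ℂ) *
    diagonal (((↑) : ℝ → ℂ) ∘ Real.sqrt ∘ hA.1.eigenvalues) *
    (star hA.1.eigenvectorUnitary : Matrix n n ℂ)

lemma traceNorm_eq (X : Matrix n n ℂ) :
    traceNorm X = ((Matrix.posSemidef_conjTranspose_mul_self X).sqrt.trace).re := rfl

open scoped MatrixOrder in
lemma Matrix.PosSemidef.sqrt_eq_cfc {A : Matrix n n ℂ} (hA : A.PosSemidef) :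
    hA.sqrt = CFC.sqrt A := by
  rw [CFC.sqrt_eq_real_sqrt A hA.nonneg, cfcₙ_eq_cfc, hA.1.cfc_eq]
  simp [Matrix.IsHermitian.cfc, Matrix.PosSemidef.sqrt, Function.comp_def]

open scoped MatrixOrder in
lemma Matrix.PosSemidef.posSemidef_sqrt {A : Matrix n n ℂ} (hA : A.PosSemidef) :
    hA.sqrt.PosSemidef := by
  rw [hA.sqrt_eq_cfc]; exact (CFC.sqrt_nonneg A).posSemidef

open scoped MatrixOrder in
lemma Matrix.PosSemidef.sq_sqrt {A : Matrix n n ℂ} (hA : A.PosSemidef) :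
    hA.sqrt ^ 2 = A := by
  rw [hA.sqrt_eq_cfc, sq, CFC.sqrt_mul_sqrt_self A hA.nonneg]

open scoped MatrixOrder in
lemma Matrix.PosSemidef.eq_sqrt_of_sq_eq {A : Matrix n n ℂ} (hA : A.PosSemidef)
    {B : Matrix n n ℂ} (hB : B.PosSemidef) (h : A ^ 2 = B) : A = hB.sqrt := by
  rw [hB.sqrt_eq_cfc]
  exact (CFC.sqrt_unique (by rw [← sq]; exact h) hA.nonneg).symm

lemma sqrt_congr' {A B : Matrix n n ℂ} (hA : A.PosSemidef) (hB : B.PosSemidef)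
    (h : A = B) : hA.sqrt = hB.sqrt := by subst h; rfl

lemma trace_conj_diag (U : Matrix n n ℂ) (hU : U ∈ Matrix.unitaryGroup n ℂ) (d : n → ℂ) :
    (U * diagonal d * Uᴴ).trace = ∑ i, d i := by
  rw [trace_mul_cycle, ← star_eq_conjTranspose,
    (mem_unitaryGroup_iff'.mp hU), one_mul, trace_diagonal]

lemma conj_diag_mul (U : Matrix n n ℂ) (hU : U ∈ Matrix.unitaryGroup n ℂ) (d e : n → ℂ) :
    (U * diagonal d * Uᴴ) * (U * diagonal e * Uᴴ) = U * diagonal (d * e) * Uᴴ := by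
  have h1 : Uᴴ * U = 1 := by
    rw [← star_eq_conjTranspose]; exact mem_unitaryGroup_iff'.mp hU
  calc (U * diagonal d * Uᴴ) * (U * diagonal e * Uᴴ)
      = U * (diagonal d * ((Uᴴ * U) * (diagonal e * Uᴴ))) := by
        simp only [mul_assoc]
    _ = U * diagonal (d * e) * Uᴴ := by
        rw [h1, one_mul, ← mul_assoc (diagonal d), diagonal_mul_diagonal, ← mul_assoc]; rfl

lemma diagonal_psd (d : n → ℝ) (hd : ∀ i, 0 ≤ d i) :
    (diagonal (fun i => (d i : ℂ))).PosSemidef := by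
  refine Matrix.PosSemidef.diagonal fun i => ?_
  show (0:ℂ) ≤ _
  exact_mod_cast hd i

lemma traceNorm_nonneg' (X : Matrix n n ℂ) : 0 ≤ traceNorm X := by
  have h := (Matrix.posSemidef_conjTranspose_mul_self X).posSemidef_sqrt
  rw [traceNorm_eq, Matrix.trace, Complex.re_sum]
  refine Finset.sum_nonneg fun i _ => ?_
  have := h.re_dotProduct_nonneg (Pi.single i 1)
  simpa [dotProduct, Matrix.mulVec_single, Pi.single_apply, Finset.sum_ite_eq,
    Matrix.diag] using this

lemma traceNorm_herm {X : Matrix n n ℂ} (hX : X.IsHermitian) :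
    traceNorm X = ∑ i, |hX.eigenvalues i| := by
  set U : Matrix n n ℂ := (hX.eigenvectorUnitary : Matrix n n ℂ)
  have hU : U ∈ Matrix.unitaryGroup n ℂ := SetLike.coe_mem _
  set lam := hX.eigenvalues
  have hspec : X = U * diagonal (fun i => (lam i : ℂ)) * Uᴴ := by
    simpa [star_eq_conjTranspose, Function.comp_def] using hX.spectral_theorem
  set B : Matrix n n ℂ := U * diagonal (fun i => ((|lam i| : ℝ) : ℂ)) * Uᴴ with hBdef
  have hB : B.PosSemidef :=
    (diagonal_psd _ fun i => abs_nonneg (lam i)).mul_mul_conjTranspose_same U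
  have hfun : ((fun i => ((|lam i| : ℝ) : ℂ)) * (fun i => ((|lam i| : ℝ) : ℂ)))
      = ((fun i => ((lam i : ℝ) : ℂ)) * (fun i => ((lam i : ℝ) : ℂ))) := by
    funext i
    simp [Pi.mul_apply, ← Complex.ofReal_mul, abs_mul_abs_self]
  have hB2 : B ^ 2 = Xᴴ * X := by
    rw [pow_two, hBdef, conj_diag_mul U hU, hX.eq]
    conv_rhs => rw [hspec, conj_diag_mul U hU]
    rw [hfun]
  have hsqrt : B = (Matrix.posSemidef_conjTranspose_mul_self X).sqrt :=
    hB.eq_sqrt_of_sq_eq _ hB2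
  rw [traceNorm_eq, ← hsqrt, hBdef, trace_conj_diag U hU]
  rw [Complex.re_sum]
  simp

lemma unitary_col_normSq (M : Matrix n n ℂ) (hM : M ∈ Matrix.unitaryGroup n ℂ) (j : n) :
    ∑ i, Complex.normSq (M i j) = 1 := by
  have h1 : Mᴴ * M = 1 := by
    rw [← star_eq_conjTranspose]; exact mem_unitaryGroup_iff'.mp hM
  have h2 := congrArg (fun A : Matrix n n ℂ => A j j) h1
  simp only [Matrix.mul_apply, Matrix.conjTranspose_apply, Matrix.one_apply_eq,
    Complex.star_def] at h2
  simp_rw [mul_comm, Complex.mul_conj] at h2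
  have := congrArg Complex.re h2
  rw [Complex.re_sum] at this
  simpa using this

lemma key_bound {X : Matrix n n ℂ} (hX : X.IsHermitian) (V : Matrix n n ℂ)
    (hV : V ∈ Matrix.unitaryGroup n ℂ) (w : n → ℝ) (hw : ∀ i, |w i| ≤ 1) :
    ∑ i, w i * ((Vᴴ * X * V) i i).re ≤ ∑ j, |hX.eigenvalues j| := by
  set U : Matrix n n ℂ := (hX.eigenvectorUnitary : Matrix n n ℂ) with hUdef
  have hU : U ∈ Matrix.unitaryGroup n ℂ := SetLike.coe_mem _
  set lam := hX.eigenvalues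
  have hspec : X = U * diagonal (fun i => (lam i : ℂ)) * Uᴴ := by
    simpa [star_eq_conjTranspose, Function.comp_def] using hX.spectral_theorem
  set M : Matrix n n ℂ := Vᴴ * U with hMdef
  have hM : M ∈ Matrix.unitaryGroup n ℂ := by
    rw [hMdef, ← star_eq_conjTranspose]
    exact mul_mem (Unitary.star_mem hV) hU
  have hVXV : Vᴴ * X * V = M * diagonal (fun i => (lam i : ℂ)) * Mᴴ := by
    rw [hspec, hMdef]
    simp only [conjTranspose_mul, conjTranspose_conjTranspose, Matrix.mul_assoc]
  have hentry : ∀ i, ((Vᴴ * X * V) i i).re = ∑ j, lam j * Complex.normSq (M i j) := by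
    intro i
    rw [hVXV]
    have : (M * diagonal (fun i => (lam i : ℂ)) * Mᴴ) i i
        = ∑ j, M i j * (lam j : ℂ) * star (M i j) := by
      rw [Matrix.mul_apply]
      congr 1; funext j
      rw [Matrix.mul_diagonal, Matrix.conjTranspose_apply]
    rw [this, Complex.re_sum]
    congr 1; funext j
    rw [Complex.star_def, mul_comm (M i j), mul_assoc, Complex.mul_conj,
      ← Complex.ofReal_mul]
    exact Complex.ofReal_re _
  calc ∑ i, w i * ((Vᴴ * X * V) i i).re
      ≤ ∑ i, ∑ j, |lam j| * Complex.normSq (M i j) := by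
        refine Finset.sum_le_sum fun i _ => ?_
        rw [hentry i]
        calc w i * ∑ j, lam j * Complex.normSq (M i j)
            ≤ |w i * ∑ j, lam j * Complex.normSq (M i j)| := le_abs_self _
          _ ≤ |∑ j, lam j * Complex.normSq (M i j)| := by
              rw [abs_mul]
              exact mul_le_of_le_one_left (abs_nonneg _) (hw i)
          _ ≤ ∑ j, |lam j * Complex.normSq (M i j)| := Finset.abs_sum_le_sum_abs _ _
          _ = ∑ j, |lam j| * Complex.normSq (M i j) := by
              congr 1; funext j
              rw [abs_mul, abs_of_nonneg (Complex.normSq_nonneg _)]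
    _ = ∑ j, |lam j| := by
        rw [Finset.sum_comm]
        refine Finset.sum_congr rfl fun j _ => ?_
        rw [← Finset.mul_sum, unitary_col_normSq M hM j, mul_one]

lemma traceNorm_add_le' {A B : Matrix n n ℂ} (hA : A.IsHermitian) (hB : B.IsHermitian) :
    traceNorm (A + B) ≤ traceNorm A + traceNorm B := by
  have hS : (A + B).IsHermitian := hA.add hB
  set V : Matrix n n ℂ := (hS.eigenvectorUnitary : Matrix n n ℂ)
  have hV : V ∈ Matrix.unitaryGroup n ℂ := SetLike.coe_mem _
  set lam := hS.eigenvalues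
  have hdiag : Vᴴ * (A + B) * V = diagonal (fun i => (lam i : ℂ)) := by
    simpa [star_eq_conjTranspose, Function.comp_def] using hS.conjStarAlgAut_star_eigenvectorUnitary
  set w : n → ℝ := fun i => if 0 ≤ lam i then 1 else -1 with hwdef
  have hw : ∀ i, |w i| ≤ 1 := by
    intro i; rw [hwdef]; dsimp only; split <;> simp
  have hsplit : Vᴴ * (A + B) * V = Vᴴ * A * V + Vᴴ * B * V := by
    rw [Matrix.mul_add, Matrix.add_mul]
  have h1 : traceNorm (A + B) = ∑ i, w i * ((Vᴴ * (A + B) * V) i i).re := by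
    rw [traceNorm_herm hS, hdiag]
    refine Finset.sum_congr rfl fun i _ => ?_
    rw [diagonal_apply_eq, Complex.ofReal_re, hwdef]
    dsimp only
    rcases le_or_gt 0 (lam i) with h | h
    · rw [if_pos h, one_mul, abs_of_nonneg h]
    · rw [if_neg (not_le.mpr h), abs_of_neg h]; ring
  rw [h1, hsplit]
  have h2 : ∀ i, ((Vᴴ * A * V + Vᴴ * B * V) i i).re
      = ((Vᴴ * A * V) i i).re + ((Vᴴ * B * V) i i).re := by
    intro i; rw [Matrix.add_apply, Complex.add_re]
  simp_rw [h2, mul_add, Finset.sum_add_distrib]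
  rw [traceNorm_herm hA, traceNorm_herm hB]
  exact add_le_add (key_bound hA V hV w hw) (key_bound hB V hV w hw)

lemma traceNorm_neg' (X : Matrix n n ℂ) : traceNorm (-X) = traceNorm X := by
  rw [traceNorm_eq, traceNorm_eq, sqrt_congr' (Matrix.posSemidef_conjTranspose_mul_self (-X))
    (Matrix.posSemidef_conjTranspose_mul_self X) (by simp)]

lemma traceNorm_sub_le' {A B : Matrix n n ℂ} (hA : A.IsHermitian) (hB : B.IsHermitian) :
    traceNorm (A - B) ≤ traceNorm A + traceNorm B := by
  rw [sub_eq_add_neg]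
  calc traceNorm (A + -B) ≤ traceNorm A + traceNorm (-B) :=
        traceNorm_add_le' hA hB.neg
    _ = traceNorm A + traceNorm B := by rw [traceNorm_neg']

lemma psd_smul_real {M : Matrix n n ℂ} (hM : M.PosSemidef) {c : ℝ} (hc : 0 ≤ c) :
    ((c : ℂ) • M).PosSemidef := by
  exact hM.smul (by exact_mod_cast hc)

lemma herm_smul_real {X : Matrix n n ℂ} (hX : X.IsHermitian) (c : ℝ) :
    ((c : ℂ) • X).IsHermitian := by
  rw [Matrix.IsHermitian, conjTranspose_smul, hX.eq]
  congr 1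
  simp

lemma traceNorm_smul' (X : Matrix n n ℂ) {c : ℝ} (hc : 0 ≤ c) :
    traceNorm ((c : ℂ) • X) = c * traceNorm X := by
  have hM := Matrix.posSemidef_conjTranspose_mul_self X
  have hcs : ((c : ℂ) • hM.sqrt).PosSemidef := psd_smul_real hM.posSemidef_sqrt hc
  have hsq : ((c : ℂ) • hM.sqrt) ^ 2 = ((c : ℂ) • X)ᴴ * ((c : ℂ) • X) := by
    rw [smul_pow, hM.sq_sqrt, conjTranspose_smul, smul_mul_assoc, Matrix.mul_smul, smul_smul]
    congr 1
    rw [Complex.star_def, Complex.conj_ofReal, sq]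
  have := hcs.eq_sqrt_of_sq_eq (Matrix.posSemidef_conjTranspose_mul_self ((c : ℂ) • X)) hsq
  rw [traceNorm_eq, traceNorm_eq, ← this, trace_smul, smul_eq_mul, Complex.re_ofReal_mul]

lemma traceNorm_pos' {X : Matrix n n ℂ} (hX : X.IsHermitian) (h0 : X ≠ 0) :
    0 < traceNorm X := by
  rw [traceNorm_herm hX]
  have hnn : ∀ i ∈ Finset.univ, (0:ℝ) ≤ |hX.eigenvalues i| := fun i _ => abs_nonneg _
  refine lt_of_le_of_ne (Finset.sum_nonneg hnn) (Ne.symm fun h => h0 ?_)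
  have hz : ∀ i, hX.eigenvalues i = 0 := fun i =>
    abs_eq_zero.mp ((Finset.sum_eq_zero_iff_of_nonneg hnn).mp h i (Finset.mem_univ i))
  have hspec := hX.spectral_theorem
  rw [show (RCLike.ofReal ∘ hX.eigenvalues : n → ℂ) = 0 from funext fun i => by
    simp [hz i]] at hspec
  simpa [Matrix.diagonal_zero, show (0 : n → ℂ) = fun _ => 0 from rfl] using hspec

end TraceNormLemmas

lemma channel_herm {dA dB : ℕ}
    {N : Matrix (Fin dA) (Fin dA) ℂ →ₗ[ℂ] Matrix (Fin dB) (Fin dB) ℂ}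
    (hN : IsQuantumChannel N) {X : Matrix (Fin dA) (Fin dA) ℂ} (hX : X.IsHermitian) :
    (N X).IsHermitian := by
  obtain ⟨k, K, hK, -⟩ := hN
  rw [hK]
  show (∑ i, K i * X * (K i)ᴴ)ᴴ = _
  rw [conjTranspose_sum]
  refine Finset.sum_congr rfl fun i _ => ?_
  simp [conjTranspose_mul, Matrix.mul_assoc, hX.eq]

set_option maxHeartbeats 1000000 in
lemma diff_bound {dA dB : ℕ} {ε : ℝ}
    {N N' : Matrix (Fin dA) (Fin dA) ℂ →ₗ[ℂ] Matrix (Fin dB) (Fin dB) ℂ}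
    (hN : IsQuantumChannel N) (hN' : IsQuantumChannel N')
    (hclose : ∀ ρ : Matrix (Fin dA) (Fin dA) ℂ, IsDensityMatrix ρ →
      traceNorm (N ρ - N' ρ) ≤ ε)
    {ρ ρ' : Matrix (Fin dA) (Fin dA) ℂ}
    (hρ : IsDensityMatrix ρ) (hρ' : IsDensityMatrix ρ') (hne : ρ ≠ ρ') :
    traceNorm (N ρ - N ρ') ≤ traceNorm (N' ρ - N' ρ') + ε * traceNorm (ρ - ρ') := by
  set δ : Matrix (Fin dA) (Fin dA) ℂ := ρ - ρ' with hδdef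
  have hδH : δ.IsHermitian := hρ.1.1.sub hρ'.1.1
  have hδ0 : δ ≠ 0 := sub_ne_zero.mpr hne
  set U : Matrix (Fin dA) (Fin dA) ℂ := (hδH.eigenvectorUnitary : Matrix (Fin dA) (Fin dA) ℂ)
  have hU : U ∈ Matrix.unitaryGroup (Fin dA) ℂ := SetLike.coe_mem _
  set lam := hδH.eigenvalues
  have hspec : δ = U * diagonal (fun i => (lam i : ℂ)) * Uᴴ := by
    simpa [star_eq_conjTranspose, Function.comp_def] using hδH.spectral_theorem
  set t : ℝ := ∑ i, max (lam i) 0 with htdef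
  set s : ℝ := ∑ i, max (-(lam i)) 0 with hsdef
  have hsum0 : ∑ i, lam i = 0 := by
    have h1 : δ.trace = 0 := by
      rw [hδdef, trace_sub, hρ.2, hρ'.2, sub_self]
    have h2 : δ.trace = ((∑ i, lam i : ℝ) : ℂ) := by
      rw [hspec, trace_conj_diag U hU]
      push_cast
      rfl
    rw [h2] at h1
    exact_mod_cast h1
  have hts : t = s := by
    have h : t - s = ∑ i, lam i := by
      rw [htdef, hsdef, ← Finset.sum_sub_distrib]
      exact Finset.sum_congr rfl fun i _ => max_zero_sub_max_neg_zero_eq_self _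
    rw [hsum0] at h
    linarith
  have htn : traceNorm δ = t + s := by
    rw [traceNorm_herm hδH, htdef, hsdef, ← Finset.sum_add_distrib]
    refine Finset.sum_congr rfl fun i _ => ?_
    rcases le_total 0 (lam i) with h | h
    · rw [abs_of_nonneg h, max_eq_left h, max_eq_right (neg_nonpos.mpr h), add_zero]
    · rw [abs_of_nonpos h, max_eq_right h, max_eq_left (neg_nonneg.mpr h), zero_add]
  have ht_pos : 0 < t := by
    have h1 : 0 < traceNorm δ := traceNorm_pos' hδH hδ0
    rw [htn, ← hts] at h1
    linarith
  set ρp : Matrix (Fin dA) (Fin dA) ℂ :=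
    U * diagonal (fun i => ((t⁻¹ * max (lam i) 0 : ℝ) : ℂ)) * Uᴴ with hρpdef
  set ρm : Matrix (Fin dA) (Fin dA) ℂ :=
    U * diagonal (fun i => ((t⁻¹ * max (-(lam i)) 0 : ℝ) : ℂ)) * Uᴴ with hρmdef
  have hρp : IsDensityMatrix ρp := by
    constructor
    · exact (diagonal_psd _ fun i =>
        mul_nonneg (inv_nonneg.mpr ht_pos.le) (le_max_right _ _)).mul_mul_conjTranspose_same U
    · rw [hρpdef, trace_conj_diag U hU, ← Complex.ofReal_sum, ← Finset.mul_sum, ← htdef,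
        inv_mul_cancel₀ ht_pos.ne', Complex.ofReal_one]
  have hρm : IsDensityMatrix ρm := by
    constructor
    · exact (diagonal_psd _ fun i =>
        mul_nonneg (inv_nonneg.mpr ht_pos.le) (le_max_right _ _)).mul_mul_conjTranspose_same U
    · rw [hρmdef, trace_conj_diag U hU, ← Complex.ofReal_sum, ← Finset.mul_sum, ← hsdef, ← hts,
        inv_mul_cancel₀ ht_pos.ne', Complex.ofReal_one]
  have hconj_smul : ∀ (c : ℂ) (d : Fin dA → ℂ),
      c • (U * diagonal d * Uᴴ) = U * diagonal (fun i => c * d i) * Uᴴ := by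
    intro c d
    have h : U * (c • diagonal d) * Uᴴ = c • (U * diagonal d * Uᴴ) := by
      rw [mul_smul_comm, smul_mul_assoc]
    rw [← h, ← diagonal_smul]
    rfl
  have hdecomp : δ = (t : ℂ) • ρp - (t : ℂ) • ρm := by
    rw [hρpdef, hρmdef, hconj_smul, hconj_smul, ← Matrix.sub_mul, ← Matrix.mul_sub,
      diagonal_sub]
    have hfun : (fun i => (t : ℂ) * ((t⁻¹ * max (lam i) 0 : ℝ) : ℂ)
        - (t : ℂ) * ((t⁻¹ * max (-(lam i)) 0 : ℝ) : ℂ))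
        = fun i => (lam i : ℂ) := by
      funext i
      have hr : t * (t⁻¹ * max (lam i) 0) - t * (t⁻¹ * max (-(lam i)) 0) = lam i := by
        rw [← mul_sub, ← mul_sub, ← mul_assoc, mul_inv_cancel₀ ht_pos.ne', one_mul,
          max_zero_sub_max_neg_zero_eq_self]
      rw [← Complex.ofReal_mul, ← Complex.ofReal_mul, ← Complex.ofReal_sub, hr]
    rw [hfun, ← hspec]
  have hherm1 : (N ρp - N' ρp).IsHermitian :=
    (channel_herm hN hρp.1.1).sub (channel_herm hN' hρp.1.1)
  have hherm2 : (N ρm - N' ρm).IsHermitian :=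
    (channel_herm hN hρm.1.1).sub (channel_herm hN' hρm.1.1)
  have hb1 : traceNorm (N δ - N' δ) ≤ ε * traceNorm δ := by
    have hNd : N δ - N' δ = (t : ℂ) • (N ρp - N' ρp) - (t : ℂ) • (N ρm - N' ρm) := by
      conv_lhs => rw [hdecomp]
      rw [map_sub, map_sub, LinearMap.map_smul, LinearMap.map_smul,
        LinearMap.map_smul, LinearMap.map_smul, smul_sub, smul_sub]
      abel
    rw [hNd]
    calc traceNorm ((t : ℂ) • (N ρp - N' ρp) - (t : ℂ) • (N ρm - N' ρm))
        ≤ traceNorm ((t : ℂ) • (N ρp - N' ρp)) + traceNorm ((t : ℂ) • (N ρm - N' ρm)) :=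
          traceNorm_sub_le' (herm_smul_real hherm1 t) (herm_smul_real hherm2 t)
      _ = t * traceNorm (N ρp - N' ρp) + t * traceNorm (N ρm - N' ρm) := by
          rw [traceNorm_smul' _ ht_pos.le, traceNorm_smul' _ ht_pos.le]
      _ ≤ t * ε + t * ε := add_le_add
          (mul_le_mul_of_nonneg_left (hclose _ hρp) ht_pos.le)
          (mul_le_mul_of_nonneg_left (hclose _ hρm) ht_pos.le)
      _ = ε * (t + s) := by rw [← hts]; ring
      _ = ε * traceNorm δ := by rw [htn]
  have hNδ : N δ = N ρ - N ρ' := by rw [hδdef, map_sub]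
  have hN'δ : N' δ = N' ρ - N' ρ' := by rw [hδdef, map_sub]
  have hsplit2 : N ρ - N ρ' = (N' ρ - N' ρ') + (N δ - N' δ) := by
    rw [hNδ, hN'δ]; abel
  calc traceNorm (N ρ - N ρ') = traceNorm ((N' ρ - N' ρ') + (N δ - N' δ)) := by
        rw [← hsplit2]
    _ ≤ traceNorm (N' ρ - N' ρ') + traceNorm (N δ - N' δ) :=
        traceNorm_add_le'
          ((channel_herm hN' hρ.1.1).sub (channel_herm hN' hρ'.1.1))
          ((channel_herm hN hδH).sub (channel_herm hN' hδH))
    _ ≤ traceNorm (N' ρ - N' ρ') + ε * traceNorm δ := add_le_add_right hb1 _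

set_option maxHeartbeats 1000000 in
/-- **Continuity of the minimum causal effect.**
If two quantum channels `N, N' : A → B` (`dA ≥ 2`) satisfy `‖N ρ − N' ρ‖₁ ≤ ε` for every
density matrix `ρ`, then `|CEmin N − CEmin N'| ≤ ε`. -/
theorem CEmin_continuity {dA dB : ℕ} (hdA : 2 ≤ dA) (ε : ℝ)
    (N N' : Matrix (Fin dA) (Fin dA) ℂ →ₗ[ℂ] Matrix (Fin dB) (Fin dB) ℂ)
    (hN : IsQuantumChannel N) (hN' : IsQuantumChannel N')
    (hclose : ∀ ρ : Matrix (Fin dA) (Fin dA) ℂ, IsDensityMatrix ρ →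
      traceNorm (N ρ - N' ρ) ≤ ε) :
    |CEmin N - CEmin N'| ≤ ε := by
  classical
  obtain ⟨i0, i1, hi⟩ : ∃ i0 i1 : Fin dA, i0 ≠ i1 :=
    ⟨⟨0, by omega⟩, ⟨1, by omega⟩, by simp [Fin.ext_iff]⟩
  set ρ₀ : Matrix (Fin dA) (Fin dA) ℂ :=
    diagonal (fun j => (((if j = i0 then (1:ℝ) else 0) : ℝ) : ℂ)) with hρ₀def
  set ρ₁ : Matrix (Fin dA) (Fin dA) ℂ :=
    diagonal (fun j => (((if j = i1 then (1:ℝ) else 0) : ℝ) : ℂ)) with hρ₁def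
  have hd0 : IsDensityMatrix ρ₀ := by
    refine ⟨diagonal_psd _ fun j => by positivity, ?_⟩
    rw [hρ₀def, trace_diagonal]
    simp [apply_ite Complex.ofReal, Finset.sum_ite_eq']
  have hd1 : IsDensityMatrix ρ₁ := by
    refine ⟨diagonal_psd _ fun j => by positivity, ?_⟩
    rw [hρ₁def, trace_diagonal]
    simp [apply_ite Complex.ofReal, Finset.sum_ite_eq']
  have hne01 : ρ₀ ≠ ρ₁ := by
    intro h
    have h2 := congrFun (congrFun h i0) i0
    rw [hρ₀def, hρ₁def] at h2
    simp only [diagonal_apply_eq, if_pos rfl, if_neg hi] at h2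
    exact one_ne_zero (by exact_mod_cast h2)
  have hbdd : ∀ (M : Matrix (Fin dA) (Fin dA) ℂ →ₗ[ℂ] Matrix (Fin dB) (Fin dB) ℂ),
      BddBelow {x : ℝ | ∃ ρ ρ' : Matrix (Fin dA) (Fin dA) ℂ,
        IsDensityMatrix ρ ∧ IsDensityMatrix ρ' ∧ ρ ≠ ρ' ∧
        x = traceNorm (M ρ - M ρ') / traceNorm (ρ - ρ')} := by
    intro M
    refine ⟨0, fun x hx => ?_⟩
    obtain ⟨ρ, ρ', _, _, _, rfl⟩ := hx
    exact div_nonneg (traceNorm_nonneg' _) (traceNorm_nonneg' _)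
  have hne : ∀ (M : Matrix (Fin dA) (Fin dA) ℂ →ₗ[ℂ] Matrix (Fin dB) (Fin dB) ℂ),
      {x : ℝ | ∃ ρ ρ' : Matrix (Fin dA) (Fin dA) ℂ,
        IsDensityMatrix ρ ∧ IsDensityMatrix ρ' ∧ ρ ≠ ρ' ∧
        x = traceNorm (M ρ - M ρ') / traceNorm (ρ - ρ')}.Nonempty :=
    fun M => ⟨_, ρ₀, ρ₁, hd0, hd1, hne01, rfl⟩
  have key : ∀ (M M' : Matrix (Fin dA) (Fin dA) ℂ →ₗ[ℂ] Matrix (Fin dB) (Fin dB) ℂ),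
      IsQuantumChannel M → IsQuantumChannel M' →
      (∀ ρ : Matrix (Fin dA) (Fin dA) ℂ, IsDensityMatrix ρ →
        traceNorm (M ρ - M' ρ) ≤ ε) →
      CEmin M - ε ≤ CEmin M' := by
    intro M M' hM hM' hcl
    rw [CEmin, CEmin]
    refine le_csInf (hne M') ?_
    rintro x ⟨ρ, ρ', h1, h2, h3, rfl⟩
    have hδpos : 0 < traceNorm (ρ - ρ') :=
      traceNorm_pos' (h1.1.1.sub h2.1.1) (sub_ne_zero.mpr h3)
    have hb := diff_bound hM hM' hcl h1 h2 h3
    have h4 : sInf {x : ℝ | ∃ ρ ρ' : Matrix (Fin dA) (Fin dA) ℂ,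
          IsDensityMatrix ρ ∧ IsDensityMatrix ρ' ∧ ρ ≠ ρ' ∧
          x = traceNorm (M ρ - M ρ') / traceNorm (ρ - ρ')}
        ≤ traceNorm (M ρ - M ρ') / traceNorm (ρ - ρ') :=
      csInf_le (hbdd M) ⟨ρ, ρ', h1, h2, h3, rfl⟩
    have h5 : traceNorm (M ρ - M ρ') / traceNorm (ρ - ρ')
        ≤ traceNorm (M' ρ - M' ρ') / traceNorm (ρ - ρ') + ε := by
      rw [div_add' _ _ _ hδpos.ne', div_le_div_iff₀ hδpos hδpos]
      calc traceNorm (M ρ - M ρ') * traceNorm (ρ - ρ')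
          ≤ (traceNorm (M' ρ - M' ρ') + ε * traceNorm (ρ - ρ')) * traceNorm (ρ - ρ') :=
            mul_le_mul_of_nonneg_right hb hδpos.le
        _ = (traceNorm (M' ρ - M' ρ') + ε * traceNorm (ρ - ρ')) * traceNorm (ρ - ρ') := rfl
    linarith
  have hclose' : ∀ ρ : Matrix (Fin dA) (Fin dA) ℂ, IsDensityMatrix ρ →
      traceNorm (N' ρ - N ρ) ≤ ε := by
    intro ρ h
    rw [show N' ρ - N ρ = -(N ρ - N' ρ) by abel, traceNorm_neg']
    exact hclose ρ h
  have hA := key N N' hN hN' hclose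
  have hB := key N' N hN' hN hclose'
  rw [abs_le]
  constructor <;> linarith
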